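/- The same first-order expansion holds for the orthogonalized update: with G, A, V, P as above, define N(η) = Vᵀ(G + ηAG)[(G + ηAG)ᵀ(G + ηAG)]⁻¹(G + ηAG)ᵀV. Then N(0) = VᵀPPᵀV and N'(0) = VᵀPPᵀAV + VᵀAPPᵀV − 2VᵀPPᵀAPPᵀV; in particular the two updates G + ηAG and G + η(I − GGᵀ)AG produce matrices M(η), N(η) agreeing to first order in η. -/

import Mathlib

open Matrix

attribute [local instance] Matrix.linftyOpNormedRing Matrix.linftyOpNormedAlgebra

section Aux
variable {n k : ℕ}

private lemma cancel_left' (G : Matrix (Fin n) (Fin k) ℝ) (hG : IsUnit (Gᵀ * G))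
    (x : Matrix (Fin k) (Fin k) ℝ) : (Gᵀ * G)⁻¹ * (Gᵀ * (G * x)) = x := by
  rw [← Matrix.mul_assoc Gᵀ G x, ← Matrix.mul_assoc, Matrix.nonsing_inv_mul _
    ((Matrix.isUnit_iff_isUnit_det _).mp hG), one_mul]

private lemma cancel_right' (G : Matrix (Fin n) (Fin k) ℝ) (hG : IsUnit (Gᵀ * G))
    (x : Matrix (Fin k) (Fin k) ℝ) : Gᵀ * (G * ((Gᵀ * G)⁻¹ * x)) = x := by
  rw [← Matrix.mul_assoc Gᵀ G _, ← Matrix.mul_assoc, Matrix.mul_nonsing_inv _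
    ((Matrix.isUnit_iff_isUnit_det _).mp hG), one_mul]

/-- entry evaluation as a continuous linear map -/
private noncomputable def entryCLM (i j : Fin k) : Matrix (Fin k) (Fin k) ℝ →L[ℝ] ℝ :=
  LinearMap.toContinuousLinearMap
    { toFun := fun A => A i j, map_add' := fun _ _ => rfl, map_smul' := fun _ _ => rfl }

private lemma gen_deriv (G W V : Matrix (Fin n) (Fin k) ℝ) (hG : IsUnit (Gᵀ * G)) (i j : Fin k) :
    HasDerivAt
      (fun η : ℝ => (Vᵀ * (G + η • W) * ((G + η • W)ᵀ * (G + η • W))⁻¹ * (G + η • W)ᵀ * V) i j)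
      ((Vᵀ * W * ((Gᵀ * G)⁻¹ * (Gᵀ * V)) + Vᵀ * G * ((Gᵀ * G)⁻¹ * (Wᵀ * V))
        - Vᵀ * G * ((Gᵀ * G)⁻¹ * ((Wᵀ * G + Gᵀ * W) * ((Gᵀ * G)⁻¹ * (Gᵀ * V))))) i j) 0 := by
  set u : ℝ → Matrix (Fin k) (Fin k) ℝ := fun η => Vᵀ * G + η • (Vᵀ * W) with hu_def
  set s : ℝ → Matrix (Fin k) (Fin k) ℝ :=
    fun η => Gᵀ * G + η • (Wᵀ * G + Gᵀ * W) + (η * η) • (Wᵀ * W) with hs_def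
  set v : ℝ → Matrix (Fin k) (Fin k) ℝ := fun η => Gᵀ * V + η • (Wᵀ * V) with hv_def
  obtain ⟨x, hx⟩ := hG
  have hs0 : s 0 = (x : Matrix (Fin k) (Fin k) ℝ) := by simp [hs_def, hx]
  have hinv : Ring.inverse (Gᵀ * G) = (Gᵀ * G)⁻¹ := (Matrix.nonsing_inv_eq_ringInverse _).symm
  have hu : HasDerivAt u (Vᵀ * W) 0 := by
    have h := (((hasDerivAt_id (0:ℝ)).smul_const (Vᵀ * W)).const_add (Vᵀ * G))
    simp only [one_smul] at h
    exact h
  have hv : HasDerivAt v (Wᵀ * V) 0 := by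
    have h := (((hasDerivAt_id (0:ℝ)).smul_const (Wᵀ * V)).const_add (Gᵀ * V))
    simp only [one_smul] at h
    exact h
  have hs : HasDerivAt s (Wᵀ * G + Gᵀ * W) 0 := by
    have h1 := ((hasDerivAt_id (0:ℝ)).smul_const (Wᵀ * G + Gᵀ * W)).const_add (Gᵀ * G)
    have h2 := ((hasDerivAt_id (0:ℝ)).mul (hasDerivAt_id 0)).smul_const (Wᵀ * W)
    rw [hs_def]
    exact (h1.add h2).congr_deriv (by simp)
  have hi : HasDerivAt (fun η => Ring.inverse (s η))
      (-((Gᵀ * G)⁻¹ * (Wᵀ * G + Gᵀ * W) * (Gᵀ * G)⁻¹)) 0 := by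
    have hF := (hasFDerivAt_ringInverse (𝕜 := ℝ) x)
    rw [← hs0] at hF
    have := hF.comp_hasDerivAt 0 hs
    rw [← hinv]
    simp [ContinuousLinearMap.mulLeftRight_apply, ← hinv, Ring.inverse_unit, hx] at this
    exact this
  have hprod : HasDerivAt (fun η => u η * Ring.inverse (s η) * v η)
      ((Vᵀ * W * ((Gᵀ * G)⁻¹ * (Gᵀ * V)) + Vᵀ * G * ((Gᵀ * G)⁻¹ * (Wᵀ * V))
        - Vᵀ * G * ((Gᵀ * G)⁻¹ * ((Wᵀ * G + Gᵀ * W) * ((Gᵀ * G)⁻¹ * (Gᵀ * V)))))) 0 := by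
    have := (hu.mul hi).mul hv
    refine this.congr_deriv ?_
    simp only [hu_def, hv_def, hs_def, hx, hinv, Ring.inverse_unit, Pi.mul_apply]
    simp only [zero_smul, add_zero, zero_mul, zero_smul, mul_zero]
    rw [hinv]
    noncomm_ring
  have key : (fun η : ℝ =>
        (Vᵀ * (G + η • W) * ((G + η • W)ᵀ * (G + η • W))⁻¹ * (G + η • W)ᵀ * V) i j)
      = fun η => entryCLM i j (u η * Ring.inverse (s η) * v η) := by
    funext η
    have e1 : (G + η • W)ᵀ * (G + η • W) = s η := by
      simp [hs_def, Matrix.transpose_add, Matrix.transpose_smul, Matrix.add_mul, Matrix.mul_add,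
        Matrix.smul_mul, Matrix.mul_smul, smul_smul]
      abel
    have e2 : ((G + η • W)ᵀ * (G + η • W))⁻¹ = Ring.inverse (s η) := by
      rw [e1, Matrix.nonsing_inv_eq_ringInverse]
    show _ = (u η * Ring.inverse (s η) * v η) i j
    rw [e2]
    simp only [hu_def, hv_def]
    simp [Matrix.mul_add, Matrix.add_mul, Matrix.transpose_add, Matrix.transpose_smul,
      Matrix.smul_mul, Matrix.mul_smul, Matrix.mul_assoc]
  rw [key]
  exact ((entryCLM i j).hasFDerivAt.comp_hasDerivAt 0 hprod)

private lemma algN (G V : Matrix (Fin n) (Fin k) ℝ) (A : Matrix (Fin n) (Fin n) ℝ)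
    (hA : Aᵀ = A) :
    Vᵀ * (A * G) * ((Gᵀ * G)⁻¹ * (Gᵀ * V)) + Vᵀ * G * ((Gᵀ * G)⁻¹ * ((A * G)ᵀ * V))
      - Vᵀ * G * ((Gᵀ * G)⁻¹ * (((A * G)ᵀ * G + Gᵀ * (A * G)) * ((Gᵀ * G)⁻¹ * (Gᵀ * V))))
    = Vᵀ * (G * (Gᵀ * G)⁻¹ * Gᵀ) * A * V + Vᵀ * A * (G * (Gᵀ * G)⁻¹ * Gᵀ) * V
      - (2:ℝ) • (Vᵀ * (G * (Gᵀ * G)⁻¹ * Gᵀ) * A * (G * (Gᵀ * G)⁻¹ * Gᵀ) * V) := by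
  simp only [Matrix.transpose_mul, hA, two_smul, Matrix.mul_assoc, Matrix.add_mul,
    Matrix.mul_add]
  abel

private lemma algM (G V : Matrix (Fin n) (Fin k) ℝ) (A : Matrix (Fin n) (Fin n) ℝ)
    (hG : IsUnit (Gᵀ * G)) (hA : Aᵀ = A) :
    Vᵀ * ((1 - G * Gᵀ) * (A * G)) * ((Gᵀ * G)⁻¹ * (Gᵀ * V))
      + Vᵀ * G * ((Gᵀ * G)⁻¹ * (((1 - G * Gᵀ) * (A * G))ᵀ * V))
      - Vᵀ * G * ((Gᵀ * G)⁻¹ * ((((1 - G * Gᵀ) * (A * G))ᵀ * G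
          + Gᵀ * ((1 - G * Gᵀ) * (A * G))) * ((Gᵀ * G)⁻¹ * (Gᵀ * V))))
    = Vᵀ * (G * (Gᵀ * G)⁻¹ * Gᵀ) * A * V + Vᵀ * A * (G * (Gᵀ * G)⁻¹ * Gᵀ) * V
      - (2:ℝ) • (Vᵀ * (G * (Gᵀ * G)⁻¹ * Gᵀ) * A * (G * (Gᵀ * G)⁻¹ * Gᵀ) * V) := by
  simp only [Matrix.transpose_sub, Matrix.transpose_mul, Matrix.transpose_one,
    Matrix.transpose_transpose, hA, two_smul, Matrix.mul_assoc, Matrix.sub_mul,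
    Matrix.mul_sub, Matrix.one_mul, Matrix.mul_one, one_mul, mul_one,
    Matrix.add_mul, Matrix.mul_add, cancel_left' G hG, cancel_right' G hG]
  abel

end Aux

/-- The same first-order expansion holds for the orthogonalized update: with
`N(η) = Vᵀ Y(η) (Y(η)ᵀY(η))⁻¹ Y(η)ᵀ V` for `Y(η) = G + ηAG`, we have `N(0) = VᵀPPᵀV` and
`N'(0) = VᵀPPᵀAV + VᵀAPPᵀV − 2VᵀPPᵀAPPᵀV`; in particular `M` and `N` (for the update
`G + η(I − GGᵀ)AG`) agree to first order in `η` at `0`. -/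
theorem normalized_update_first_order {n k : ℕ}
    (G : Matrix (Fin n) (Fin k) ℝ) (A : Matrix (Fin n) (Fin n) ℝ)
    (V : Matrix (Fin n) (Fin k) ℝ)
    (hG : IsUnit (Gᵀ * G)) (hA : A.IsSymm)
    (PP : Matrix (Fin n) (Fin n) ℝ) (hPP : PP = G * (Gᵀ * G)⁻¹ * Gᵀ)
    (X Y : ℝ → Matrix (Fin n) (Fin k) ℝ)
    (hX : ∀ η, X η = G + η • ((1 - G * Gᵀ) * (A * G)))
    (hY : ∀ η, Y η = G + η • (A * G))
    (M N : ℝ → Matrix (Fin k) (Fin k) ℝ)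
    (hM : ∀ η, M η = Vᵀ * X η * ((X η)ᵀ * X η)⁻¹ * (X η)ᵀ * V)
    (hN : ∀ η, N η = Vᵀ * Y η * ((Y η)ᵀ * Y η)⁻¹ * (Y η)ᵀ * V) :
    N 0 = Vᵀ * PP * V ∧
      (∀ i j, HasDerivAt (fun η => N η i j)
        ((Vᵀ * PP * A * V + Vᵀ * A * PP * V
          - (2 : ℝ) • (Vᵀ * PP * A * PP * V)) i j) 0) ∧
      M 0 = N 0 ∧
      (∀ i j, HasDerivAt (fun η => M η i j)
        ((Vᵀ * PP * A * V + Vᵀ * A * PP * V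
          - (2 : ℝ) • (Vᵀ * PP * A * PP * V)) i j) 0) := by
  have hA' : Aᵀ = A := hA
  have hY0 : Y 0 = G := by simp [hY]
  have hX0 : X 0 = G := by simp [hX]
  have hN0 : N 0 = Vᵀ * PP * V := by
    rw [hN, hY0, hPP]
    simp [Matrix.mul_assoc]
  refine ⟨hN0, fun i j => ?_, ?_, fun i j => ?_⟩
  · have hfun : (fun η => N η i j) = fun η : ℝ =>
        (Vᵀ * (G + η • (A * G)) * ((G + η • (A * G))ᵀ * (G + η • (A * G)))⁻¹
          * (G + η • (A * G))ᵀ * V) i j := by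
      funext η; rw [hN, hY]
    rw [hfun]
    have h := gen_deriv G (A * G) V hG i j
    rwa [algN G V A hA', ← hPP] at h
  · rw [hM, hN, hX0, hY0]
  · set W := (1 - G * Gᵀ) * (A * G) with hW
    have hfun : (fun η => M η i j) = fun η : ℝ =>
        (Vᵀ * (G + η • W) * ((G + η • W)ᵀ * (G + η • W))⁻¹ * (G + η • W)ᵀ * V) i j := by
      funext η; rw [hM, hX]
    rw [hfun]
    have h := gen_deriv G W V hG i j
    rw [hW] at h
    rwa [algM G V A hG hA', ← hPP] at h
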